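/- Under the stated OLS setup, the relevance by omission of Z evaluated in the training sample, Rel_Om^Train(Z) := (1/n₁)·‖(X₁β̂_x + z₁β̂_z) − X₁β̂₀‖², satisfies Rel_Om^Train(Z) = β̂_z²·k/n₁ = β̂_z²·σ̂²_{z.x,n₁}, and consequently, if σ̂² > 0, (n₁/σ̂²)·Rel_Om^Train(Z) = F_z, where F_z := β̂_z²·k/σ̂² is the F-test statistic for the null hypothesis β_z = 0. -/

import Mathlib

open Matrix

/-- **Relevance by omission in the training sample (Proposition: Rel_Om^Train).**
Under the stated OLS setup, the relevance by omission of `Z` evaluated in the training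
sample, `Rel_Om^Train(Z) := (1/n₁)·‖(X₁β̂_x + z₁β̂_z) − X₁β̂₀‖²`, satisfies
`Rel_Om^Train(Z) = β̂_z²·k/n₁ = β̂_z²·σ̂²_{z.x,n₁}`, and consequently, if `σ̂² > 0`,
`(n₁/σ̂²)·Rel_Om^Train(Z) = F_z`, where `F_z := β̂_z²·k/σ̂²`. -/
theorem relevance_by_omission_training
    {n₁ p : ℕ} (hn₁ : 0 < n₁) (hp : 0 < p) (hnp : p + 1 < n₁)
    (X₁ : Matrix (Fin n₁) (Fin p) ℝ) (z₁ y₁ : Fin n₁ → ℝ)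
    -- the augmented matrix `W = [X₁ z₁]` (last column is `z₁`)
    (W : Matrix (Fin n₁) (Fin (p + 1)) ℝ)
    (hW : W = Matrix.of fun i j => Fin.lastCases (z₁ i) (fun j' => X₁ i j') j)
    -- the augmented Gram matrix `[X₁ z₁]ᵀ[X₁ z₁]` is invertible
    (hWunit : IsUnit (Wᵀ * W).det)
    -- hence `X₁ᵀX₁` is invertible
    (hXunit : IsUnit (X₁ᵀ * X₁).det)
    -- stacked joint OLS coefficients `b = ([X₁ z₁]ᵀ[X₁ z₁])⁻¹[X₁ z₁]ᵀy₁`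
    (b : Fin (p + 1) → ℝ) (hb : b = (Wᵀ * W)⁻¹ *ᵥ (Wᵀ *ᵥ y₁))
    (βx : Fin p → ℝ) (βz : ℝ)
    (hβx : βx = fun j => b j.castSucc) (hβz : βz = b (Fin.last p))
    -- reduced-model OLS coefficients `β̂₀ = (X₁ᵀX₁)⁻¹X₁ᵀy₁`
    (β0 : Fin p → ℝ) (hβ0 : β0 = (X₁ᵀ * X₁)⁻¹ *ᵥ (X₁ᵀ *ᵥ y₁))
    -- `α̂₁ = (X₁ᵀX₁)⁻¹X₁ᵀz₁`, `ẑ₁ = X₁α̂₁`, `k = (z₁ − ẑ₁)ᵀ(z₁ − ẑ₁)`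
    (α₁ : Fin p → ℝ) (hα₁ : α₁ = (X₁ᵀ * X₁)⁻¹ *ᵥ (X₁ᵀ *ᵥ z₁))
    (zhat₁ : Fin n₁ → ℝ) (hzhat₁ : zhat₁ = X₁ *ᵥ α₁)
    (k : ℝ) (hk : k = (z₁ - zhat₁) ⬝ᵥ (z₁ - zhat₁))
    -- `σ̂²_{z.x,n₁} = k/n₁`
    (σ2zx : ℝ) (hσ2zx : σ2zx = k / n₁)
    -- residual variance `σ̂²`
    (σ2 : ℝ)
    (hσ2 : σ2 = (y₁ - X₁ *ᵥ βx - βz • z₁) ⬝ᵥ (y₁ - X₁ *ᵥ βx - βz • z₁) / (n₁ - p - 1))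
    -- `F_z := β̂_z²·k/σ̂²`, the F-test statistic for `H₀ : β_z = 0`
    (Fz : ℝ) (hFz : Fz = βz ^ 2 * k / σ2)
    -- `Rel_Om^Train(Z) := (1/n₁)·‖(X₁β̂_x + z₁β̂_z) − X₁β̂₀‖²`
    (Rel : ℝ)
    (hRel : Rel = (1 / n₁) *
      (((X₁ *ᵥ βx + βz • z₁) - X₁ *ᵥ β0) ⬝ᵥ ((X₁ *ᵥ βx + βz • z₁) - X₁ *ᵥ β0))) :
    Rel = βz ^ 2 * k / n₁ ∧ Rel = βz ^ 2 * σ2zx ∧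
      (0 < σ2 → (n₁ / σ2) * Rel = Fz) := by

  -- normal equations
  have hWW : (Wᵀ * W) *ᵥ b = Wᵀ *ᵥ y₁ := by
    rw [hb, Matrix.mulVec_mulVec, Matrix.mul_nonsing_inv _ hWunit, Matrix.one_mulVec]
  -- W *ᵥ b = X₁ *ᵥ βx + βz • z₁
  have hWb : W *ᵥ b = X₁ *ᵥ βx + βz • z₁ := by
    funext i
    simp only [Matrix.mulVec, dotProduct, Pi.add_apply, Pi.smul_apply, smul_eq_mul]
    rw [Fin.sum_univ_castSucc]
    simp [hW, hβx, hβz, mul_comm]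
  -- extract castSucc rows of the normal equations
  have hcol : ∀ (v : Fin n₁ → ℝ) (j : Fin p),
      (Wᵀ *ᵥ v) j.castSucc = (X₁ᵀ *ᵥ v) j := by
    intro v j
    simp [Matrix.mulVec, dotProduct, Matrix.transpose_apply, hW]
  have hNE : X₁ᵀ *ᵥ (X₁ *ᵥ βx + βz • z₁) = X₁ᵀ *ᵥ y₁ := by
    funext j
    have := congrFun hWW j.castSucc
    rw [← Matrix.mulVec_mulVec] at this
    rw [← hcol y₁ j, ← this, hcol, hWb]
  -- β0 = βx + βz • α₁
  have hinv : ∀ w : Fin p → ℝ, (X₁ᵀ * X₁)⁻¹ *ᵥ ((X₁ᵀ * X₁) *ᵥ w) = w := by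
    intro w
    rw [Matrix.mulVec_mulVec, Matrix.nonsing_inv_mul _ hXunit, Matrix.one_mulVec]
  have hβ0' : β0 = βx + βz • α₁ := by
    rw [hβ0, ← hNE]
    rw [Matrix.mulVec_add, Matrix.mulVec_smul, Matrix.mulVec_add]
    rw [Matrix.mulVec_smul, Matrix.mulVec_mulVec βx X₁ᵀ X₁, hinv, hα₁]
  -- difference is βz • (z₁ - zhat₁)
  have hdiff : (X₁ *ᵥ βx + βz • z₁) - X₁ *ᵥ β0 = βz • (z₁ - zhat₁) := by
    rw [hβ0', Matrix.mulVec_add, Matrix.mulVec_smul, hzhat₁]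
    ext i
    simp [smul_sub]
    ring
  have hRel' : Rel = βz ^ 2 * k / n₁ := by
    rw [hRel, hdiff, hk, smul_dotProduct, dotProduct_smul]
    simp [smul_eq_mul]
    ring
  refine ⟨hRel', ?_, ?_⟩
  · rw [hRel', hσ2zx]; ring
  · intro hσ
    have hσne : σ2 ≠ 0 := ne_of_gt hσ
    have hn : (n₁ : ℝ) ≠ 0 := Nat.cast_ne_zero.mpr hn₁.ne'
    rw [hRel', hFz]
    field_simp
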